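/- Let γ > β be real numbers and c₂, c₃ > 0. Let (V_ℓ)_{ℓ∈ℕ} and (C_ℓ)_{ℓ∈ℕ} be nonnegative reals with V_ℓ ≤ c₂·2^{−βℓ} and C_ℓ ≤ c₃·2^{γℓ} for all ℓ. Then for every L ∈ ℕ, ∑_{ℓ=0}^{L} √(V_ℓ·C_ℓ) ≤ √(c₂·c₃)·2^{(γ−β)L/2}/(1 − 2^{−(γ−β)/2}); in particular the total cost of the optimally calibrated multilevel Monte Carlo estimator, (2/ε²)·(∑_{ℓ=0}^{L} √(V_ℓ·C_ℓ))², is bounded by (2c₂c₃/ε²)·2^{(γ−β)L}·(1 − 2^{−(γ−β)/2})^{−2}, so the dominant contribution comes from the finest level L. -/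

import Mathlib

open Finset

/-- In the regime `γ > β` (cost grows faster than the variance decays), the sum
`∑_{ℓ=0}^{L} √(V_ℓ C_ℓ)` is bounded by `√(c₂c₃)·2^{(γ-β)L/2}/(1 - 2^{-(γ-β)/2})`,
so the total cost `(2/ε²)·(∑ √(V_ℓ C_ℓ))²` of the optimally calibrated MLMC estimator
is bounded by `(2c₂c₃/ε²)·2^{(γ-β)L}·(1 - 2^{-(γ-β)/2})⁻²`: the dominant contribution
comes from the finest level `L`. -/
theorem mlmc_cost_gamma_gt_beta
    (β γ c₂ c₃ : ℝ) (hβγ : β < γ) (hc₂ : 0 < c₂) (hc₃ : 0 < c₃)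
    (V C : ℕ → ℝ) (hV0 : ∀ ℓ, 0 ≤ V ℓ) (hC0 : ∀ ℓ, 0 ≤ C ℓ)
    (hV : ∀ ℓ : ℕ, V ℓ ≤ c₂ * (2 : ℝ) ^ (-(β * ℓ)))
    (hC : ∀ ℓ : ℕ, C ℓ ≤ c₃ * (2 : ℝ) ^ (γ * ℓ)) :
    ∀ L : ℕ,
      (∑ ℓ ∈ Finset.range (L + 1), Real.sqrt (V ℓ * C ℓ)
        ≤ Real.sqrt (c₂ * c₃) * (2 : ℝ) ^ ((γ - β) * L / 2)
          / (1 - (2 : ℝ) ^ (-(γ - β) / 2))) ∧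
      ∀ ε : ℝ, 0 < ε →
        (2 / ε ^ 2) * (∑ ℓ ∈ Finset.range (L + 1), Real.sqrt (V ℓ * C ℓ)) ^ 2
          ≤ (2 * c₂ * c₃ / ε ^ 2) * (2 : ℝ) ^ ((γ - β) * L)
            * ((1 - (2 : ℝ) ^ (-(γ - β) / 2))⁻¹) ^ 2 := by
  intro L
  have h2 : (0:ℝ) < 2 := two_pos
  have hδ : 0 < (γ - β) / 2 := by linarith
  set r : ℝ := (2 : ℝ) ^ (-(γ - β) / 2) with hrdef
  have hr0 : 0 < r := Real.rpow_pos_of_pos h2 _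
  have hr1 : r < 1 := Real.rpow_lt_one_of_one_lt_of_neg one_lt_two (by linarith)
  have h1r : 0 < 1 - r := by linarith
  -- termwise bound
  have hterm : ∀ ℓ : ℕ, Real.sqrt (V ℓ * C ℓ)
      ≤ Real.sqrt (c₂ * c₃) * (2 : ℝ) ^ ((γ - β) * ℓ / 2) := by
    intro ℓ
    have h1 : V ℓ * C ℓ ≤ (c₂ * (2 : ℝ) ^ (-(β * ℓ))) * (c₃ * (2 : ℝ) ^ (γ * ℓ)) :=
      mul_le_mul (hV ℓ) (hC ℓ) (hC0 ℓ) (by positivity)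
    have h2' : (c₂ * (2 : ℝ) ^ (-(β * ℓ))) * (c₃ * (2 : ℝ) ^ (γ * ℓ))
        = (c₂ * c₃) * (2 : ℝ) ^ ((γ - β) * ℓ) := by
      rw [show ((γ - β) * ℓ : ℝ) = -(β * ℓ) + γ * ℓ by ring, Real.rpow_add h2]
      ring
    calc Real.sqrt (V ℓ * C ℓ) ≤ Real.sqrt ((c₂ * c₃) * (2 : ℝ) ^ ((γ - β) * ℓ)) :=
          Real.sqrt_le_sqrt (by rw [← h2']; exact h1)
      _ = Real.sqrt (c₂ * c₃) * (2 : ℝ) ^ ((γ - β) * ℓ / 2) := by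
          rw [Real.sqrt_mul (by positivity),
            Real.sqrt_eq_rpow ((2:ℝ) ^ ((γ - β) * (ℓ:ℝ))),
            ← Real.rpow_mul (le_of_lt h2)]
          ring_nf
  -- geometric sum bound
  have hgeom : ∑ ℓ ∈ Finset.range (L + 1), (2 : ℝ) ^ ((γ - β) * ℓ / 2)
      ≤ (2 : ℝ) ^ ((γ - β) * L / 2) / (1 - r) := by
    have hrw : ∀ ℓ ∈ Finset.range (L + 1),
        (2 : ℝ) ^ ((γ - β) * ℓ / 2) = (2 : ℝ) ^ ((γ - β) * L / 2) * r ^ (L - ℓ) := by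
      intro ℓ hℓ
      have hle : ℓ ≤ L := Nat.lt_succ_iff.mp (Finset.mem_range.mp hℓ)
      have hcast : ((L - ℓ : ℕ) : ℝ) = (L : ℝ) - (ℓ : ℝ) := by
        rw [Nat.cast_sub hle]
      rw [hrdef, ← Real.rpow_natCast ((2:ℝ) ^ (-(γ - β) / 2)) (L - ℓ),
        ← Real.rpow_mul (le_of_lt h2), ← Real.rpow_add h2, hcast]
      ring_nf
    rw [Finset.sum_congr rfl hrw, ← Finset.mul_sum]
    rw [div_eq_mul_inv]
    apply mul_le_mul_of_nonneg_left _ (by positivity)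
    have hrefl : ∑ ℓ ∈ Finset.range (L + 1), r ^ (L - ℓ)
        = ∑ k ∈ Finset.range (L + 1), r ^ k := by
      simpa using Finset.sum_range_reflect (fun j => r ^ j) (L + 1)
    rw [hrefl, geom_sum_eq (ne_of_lt hr1),
      div_le_iff_of_neg (by linarith : r - 1 < 0)]
    have hm1 : (1 - r)⁻¹ * (r - 1) = -1 := by field_simp; ring
    rw [hm1]
    nlinarith [pow_pos hr0 (L + 1)]
  have key : ∑ ℓ ∈ Finset.range (L + 1), Real.sqrt (V ℓ * C ℓ)
      ≤ Real.sqrt (c₂ * c₃) * (2 : ℝ) ^ ((γ - β) * L / 2) / (1 - r) := by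
    calc ∑ ℓ ∈ Finset.range (L + 1), Real.sqrt (V ℓ * C ℓ)
        ≤ ∑ ℓ ∈ Finset.range (L + 1), Real.sqrt (c₂ * c₃) * (2 : ℝ) ^ ((γ - β) * ℓ / 2) :=
          Finset.sum_le_sum fun ℓ _ => hterm ℓ
      _ = Real.sqrt (c₂ * c₃) * ∑ ℓ ∈ Finset.range (L + 1), (2 : ℝ) ^ ((γ - β) * ℓ / 2) := by
          rw [Finset.mul_sum]
      _ ≤ Real.sqrt (c₂ * c₃) * ((2 : ℝ) ^ ((γ - β) * L / 2) / (1 - r)) :=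
          mul_le_mul_of_nonneg_left hgeom (Real.sqrt_nonneg _)
      _ = Real.sqrt (c₂ * c₃) * (2 : ℝ) ^ ((γ - β) * L / 2) / (1 - r) := by ring
  refine ⟨key, fun ε hε => ?_⟩
  have hS0 : 0 ≤ ∑ ℓ ∈ Finset.range (L + 1), Real.sqrt (V ℓ * C ℓ) :=
    Finset.sum_nonneg fun ℓ _ => Real.sqrt_nonneg _
  have hsq : (∑ ℓ ∈ Finset.range (L + 1), Real.sqrt (V ℓ * C ℓ)) ^ 2
      ≤ (Real.sqrt (c₂ * c₃) * (2 : ℝ) ^ ((γ - β) * L / 2) / (1 - r)) ^ 2 :=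
    pow_le_pow_left₀ hS0 key 2
  have hB : (Real.sqrt (c₂ * c₃) * (2 : ℝ) ^ ((γ - β) * L / 2) / (1 - r)) ^ 2
      = (c₂ * c₃) * (2 : ℝ) ^ ((γ - β) * L) * ((1 - r)⁻¹) ^ 2 := by
    rw [div_pow, mul_pow, Real.sq_sqrt (by positivity), ← Real.rpow_natCast
      ((2:ℝ) ^ ((γ - β) * L / 2)) 2, ← Real.rpow_mul (le_of_lt h2)]
    rw [show ((γ - β) * (L:ℝ) / 2) * ((2:ℕ):ℝ) = (γ - β) * (L:ℝ) by push_cast; ring,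
      inv_pow, div_eq_mul_inv]
  calc (2 / ε ^ 2) * (∑ ℓ ∈ Finset.range (L + 1), Real.sqrt (V ℓ * C ℓ)) ^ 2
      ≤ (2 / ε ^ 2) * ((c₂ * c₃) * (2 : ℝ) ^ ((γ - β) * L) * ((1 - r)⁻¹) ^ 2) := by
        apply mul_le_mul_of_nonneg_left _ (by positivity)
        rw [← hB]; exact hsq
    _ = (2 * c₂ * c₃ / ε ^ 2) * (2 : ℝ) ^ ((γ - β) * L) * ((1 - r)⁻¹) ^ 2 := by ring
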